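/- arXiv:cs/0310027 — 5 statements merged into one kernel-verified Lean document; each statement's English description precedes it below -/
import Mathlib

section
/- For a triangle τ with vertices A, B, C in the plane, where edge AB is horizontal with length a, the altitude from C has length c, and the foot of the altitude from C is at distance b from A along line AB, the average L1 distance from points of τ to the vertex A equals (a + b + c)/3. -/
open MeasureTheory

lemma combo3_mem_convexHull {P Q R : ℝ × ℝ} {α β γ : ℝ}
    (hα : 0 ≤ α) (hβ : 0 ≤ β) (hγ : 0 ≤ γ) (hsum : α + β + γ = 1) :
    α • P + β • Q + γ • R ∈ convexHull ℝ {P, Q, R} := by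
  have h := Finset.centerMass_mem_convexHull (s := ({P, Q, R} : Set (ℝ × ℝ)))
    (Finset.univ : Finset (Fin 3))
    (w := ![α, β, γ]) (z := ![P, Q, R])
    (fun i _ => by fin_cases i <;> simpa)
    (by simp [Fin.sum_univ_three]; linarith)
    (fun i _ => by fin_cases i <;> simp [Set.mem_insert_iff])
  rwa [Finset.centerMass_eq_of_sum_1 _ _ (by simp [Fin.sum_univ_three]; linarith),
    Fin.sum_univ_three] at h
  
lemma poly_int (k0 k1 k2 T : ℝ) :
    ∫ y in (0:ℝ)..T, (k0 + k1 * y + k2 * y ^ 2) = k0 * T + k1 * T ^ 2 / 2 + k2 * T ^ 3 / 3 := by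
  have h1 : IntervalIntegrable (fun _ : ℝ => k0) volume 0 T := intervalIntegrable_const
  have h2 : IntervalIntegrable (fun y : ℝ => k1 * y) volume 0 T :=
    (continuous_const.mul continuous_id).intervalIntegrable _ _
  have h3 : IntervalIntegrable (fun y : ℝ => k2 * y ^ 2) volume 0 T :=
    (continuous_const.mul (continuous_pow 2)).intervalIntegrable _ _
  rw [intervalIntegral.integral_add (h1.add h2) h3, intervalIntegral.integral_add h1 h2,
    intervalIntegral.integral_const, intervalIntegral.integral_const_mul,
    intervalIntegral.integral_const_mul, integral_id,
    integral_pow]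
  simp only [smul_eq_mul, sub_zero]
  push_cast
  ring

lemma hull_eq (a b c : ℝ) (ha : 0 < a) (hb : 0 ≤ b) (hc : 0 < c) :
    convexHull ℝ {((0:ℝ),(0:ℝ)), (a,0), (b,c)} =
      {p : ℝ × ℝ | 0 ≤ p.2 ∧ p.2 ≤ c ∧ b * p.2 ≤ c * p.1 ∧
        c * p.1 ≤ a * c + (b - a) * p.2} := by
  apply le_antisymm
  · apply convexHull_min
    · rintro p hp
      simp only [Set.mem_insert_iff, Set.mem_singleton_iff] at hp
      rcases hp with rfl | rfl | rfl <;>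
        refine ⟨?_, ?_, ?_, ?_⟩ <;> simp <;> nlinarith
    · rintro p hp q hq u v hu hv huv
      obtain ⟨hp1, hp2, hp3, hp4⟩ := hp
      obtain ⟨hq1, hq2, hq3, hq4⟩ := hq
      have hv' : v = 1 - u := by linarith
      subst hv'
      refine ⟨?_, ?_, ?_, ?_⟩ <;>
        simp only [Set.mem_setOf_eq, Prod.fst_add, Prod.snd_add, Prod.smul_fst,
          Prod.smul_snd, smul_eq_mul] <;>
        nlinarith [mul_le_mul_of_nonneg_left hp4 hu, mul_le_mul_of_nonneg_left hq4 hv,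
          mul_le_mul_of_nonneg_left hp3 hu, mul_le_mul_of_nonneg_left hq3 hv]
  · rintro ⟨x, y⟩ ⟨h1, h2, h3, h4⟩
    simp only [Set.mem_setOf_eq] at h1 h2 h3 h4 ⊢
    have hx : ((x, y) : ℝ × ℝ) =
        (1 - (c*x - b*y)/(a*c) - y/c) • ((0:ℝ),(0:ℝ)) +
        ((c*x - b*y)/(a*c)) • (a, 0) + (y/c) • (b, c) := by
      have hc' : c ≠ 0 := hc.ne'
      have ha' : a ≠ 0 := ha.ne'
      apply Prod.ext <;>
        simp only [Prod.fst_add, Prod.snd_add, Prod.smul_fst, Prod.smul_snd,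
          smul_eq_mul] <;> field_simp <;> ring
    rw [hx]
    apply combo3_mem_convexHull
    · have hle : (c*x - b*y)/(a*c) + y/c ≤ 1 := by
        have h5 : (c*x - b*y)/(a*c) + y/c = (c*x - b*y + a*y)/(a*c) := by
          field_simp
        rw [h5, div_le_one (by positivity)]
        nlinarith
      linarith
    · exact div_nonneg (by linarith) (by positivity)
    · exact div_nonneg h1 hc.le
    · ring

lemma slice_integral (a b c : ℝ) (ha : 0 < a) (hb : 0 ≤ b) (hc : 0 < c)
    (f : ℝ × ℝ → ℝ) (hf : Continuous f) :
    ∫ p in {p : ℝ × ℝ | 0 ≤ p.2 ∧ p.2 ≤ c ∧ b * p.2 ≤ c * p.1 ∧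
        c * p.1 ≤ a * c + (b - a) * p.2}, f p =
      ∫ y in Set.Icc (0:ℝ) c,
        ∫ x in Set.Icc (b * y / c) ((a * c + (b - a) * y) / c), f (x, y) := by
  set E := {p : ℝ × ℝ | 0 ≤ p.2 ∧ p.2 ≤ c ∧ b * p.2 ≤ c * p.1 ∧
      c * p.1 ≤ a * c + (b - a) * p.2} with hE
  have hEhull : E = convexHull ℝ {((0:ℝ),(0:ℝ)), (a,0), (b,c)} := (hull_eq a b c ha hb hc).symm
  have hcomp : IsCompact E := by
    rw [hEhull]
    exact (Set.toFinite _).isCompact_convexHull ℝ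
  have hEm : MeasurableSet E := hcomp.isClosed.measurableSet
  have hint : IntegrableOn f E := hf.continuousOn.integrableOn_compact hcomp
  have hind : Integrable (E.indicator f) (volume.prod volume) := by
    rw [← Measure.volume_eq_prod]
    exact (integrable_indicator_iff hEm).2 hint
  rw [← integral_indicator hEm, Measure.volume_eq_prod,
    integral_prod_symm _ hind]
  have hstep : ∀ y : ℝ, (∫ x, E.indicator f (x, y)) =
      (Set.Icc (0:ℝ) c).indicator
        (fun y => ∫ x in Set.Icc (b * y / c) ((a * c + (b - a) * y) / c), f (x, y)) y := by
    intro y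
    by_cases hy : y ∈ Set.Icc (0:ℝ) c
    · rw [Set.indicator_of_mem hy]
      have hfun : (fun x => E.indicator f (x, y)) =
          (Set.Icc (b * y / c) ((a * c + (b - a) * y) / c)).indicator (fun x => f (x, y)) := by
        funext x
        have hiff : (x, y) ∈ E ↔ x ∈ Set.Icc (b * y / c) ((a * c + (b - a) * y) / c) := by
          simp only [hE, Set.mem_setOf_eq, Set.mem_Icc]
          constructor
          · rintro ⟨-, -, h3, h4⟩
            exact ⟨(div_le_iff₀ hc).2 (by linarith), (le_div_iff₀ hc).2 (by linarith)⟩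
          · rintro ⟨hx1, hx2⟩
            rw [div_le_iff₀ hc] at hx1
            rw [le_div_iff₀ hc] at hx2
            exact ⟨hy.1, hy.2, by linarith, by linarith⟩
        by_cases hx : (x, y) ∈ E
        · rw [Set.indicator_of_mem hx, Set.indicator_of_mem (hiff.1 hx)]
        · rw [Set.indicator_of_notMem hx, Set.indicator_of_notMem (fun h => hx (hiff.2 h))]
      rw [hfun, integral_indicator measurableSet_Icc]
    · rw [Set.indicator_of_notMem hy]
      have hfun : (fun x => E.indicator f (x, y)) = fun _ => (0:ℝ) := by
        funext x
        refine Set.indicator_of_notMem (fun h => hy ?_) _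
        exact ⟨h.1, h.2.1⟩
      rw [hfun, integral_zero]
  simp_rw [hstep]
  rw [integral_indicator measurableSet_Icc]

/-- The average L1 distance from points of a nondegenerate triangle with
vertices `A = (0,0)`, `B = (a,0)`, `C = (b,c)` (so `AB` horizontal of length `a`,
altitude from `C` of length `c`, foot of the altitude at distance `b` from `A`)
to the vertex `A` equals `(a + b + c)/3`. -/
theorem average_L1_distance_triangle (a b c : ℝ) (ha : 0 < a) (hb : 0 ≤ b) (hc : 0 < c)
    (τ : Set (ℝ × ℝ))
    (hτ : τ = convexHull ℝ {((0 : ℝ), (0 : ℝ)), (a, 0), (b, c)}) :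
    (volume τ).toReal⁻¹ * ∫ p in τ, (|p.1 - 0| + |p.2 - 0|) = (a + b + c) / 3 := by
  rw [hτ, hull_eq a b c ha hb hc]
  set E := {p : ℝ × ℝ | 0 ≤ p.2 ∧ p.2 ≤ c ∧ b * p.2 ≤ c * p.1 ∧
      c * p.1 ≤ a * c + (b - a) * p.2} with hE
  have hEhull : E = convexHull ℝ {((0:ℝ),(0:ℝ)), (a,0), (b,c)} := (hull_eq a b c ha hb hc).symm
  have hcomp : IsCompact E := by
    rw [hEhull]; exact (Set.toFinite _).isCompact_convexHull ℝ
  have hEm : MeasurableSet E := hcomp.isClosed.measurableSet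
  have hle : ∀ y ∈ Set.Icc (0:ℝ) c, b * y / c ≤ (a * c + (b - a) * y) / c := by
    intro y hy
    obtain ⟨hy0, hyc⟩ := hy
    rw [div_le_div_iff_of_pos_right hc]
    nlinarith
  -- compute the volume
  have hvol : (volume E).toReal = a * c / 2 := by
    have h1 : ∫ p in E, (1:ℝ) = (volume E).toReal := by
      rw [setIntegral_const]; simp; rfl
    rw [← h1, slice_integral a b c ha hb hc (fun _ => (1:ℝ)) continuous_const]
    rw [setIntegral_congr_fun measurableSet_Icc
      (g := fun y => a + (-(a/c)) * y + 0 * y ^ 2) ?_]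
    · rw [MeasureTheory.integral_Icc_eq_integral_Ioc,
        ← intervalIntegral.integral_of_le hc.le, poly_int]
      field_simp
      ring
    · intro y hy
      have hle' := hle y hy
      simp only
      rw [setIntegral_const, smul_eq_mul, mul_one, measureReal_def, Real.volume_Icc,
        ENNReal.toReal_ofReal (by linarith)]
      have hc' : c ≠ 0 := hc.ne'
      field_simp
      ring
  -- compute the integral
  have hI : ∫ p in E, (|p.1 - 0| + |p.2 - 0|) = a * c * (a + b + c) / 6 := by
    have habs : Set.EqOn (fun p : ℝ × ℝ => |p.1 - 0| + |p.2 - 0|)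
        (fun p : ℝ × ℝ => p.1 + p.2) E := by
      intro p hp
      obtain ⟨h1, h2, h3, h4⟩ := hp
      have hx : 0 ≤ p.1 := by nlinarith
      simp only [sub_zero]
      rw [abs_of_nonneg hx, abs_of_nonneg h1]
    rw [setIntegral_congr_fun hEm habs,
      slice_integral a b c ha hb hc (fun p => p.1 + p.2) (by continuity)]
    rw [setIntegral_congr_fun measurableSet_Icc
      (g := fun y => a^2/2 + ((a*(b-a) + a*c)/c) * y + (-(a*(2*b-a)/2 + a*c)/c^2) * y ^ 2) ?_]
    · rw [MeasureTheory.integral_Icc_eq_integral_Ioc,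
        ← intervalIntegral.integral_of_le hc.le, poly_int]
      have hc' : c ≠ 0 := hc.ne'
      field_simp
      ring
    · intro y hy
      have hle' := hle y hy
      simp only
      rw [MeasureTheory.integral_Icc_eq_integral_Ioc,
        ← intervalIntegral.integral_of_le hle']
      rw [intervalIntegral.integral_add (f := fun x => x) (g := fun _ => y) (continuous_id.intervalIntegrable _ _) intervalIntegrable_const,
        integral_id, intervalIntegral.integral_const, smul_eq_mul]
      have hc' : c ≠ 0 := hc.ne'
      field_simp
      ring
  rw [hvol, hI]
  field_simp
  ring
end

section
/- Let P ⊆ ℝ² be a compact set of positive area μ, and define f(Z) = ∫_P ‖Z − p‖₁ dp. For Z = (x,y) such that the vertical line {u = x} intersects P in a set of measure zero, the partial derivative of f with respect to x at Z exists and equals w(Z) − e(Z), where w(Z) is the area of {(u,v) ∈ P : u < x} and e(Z) is the area of {(u,v) ∈ P : u > x}. -/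
open MeasureTheory

/-- Partial derivative in `x` of `f(Z) = ∫_P ‖Z − p‖₁ dp`: if the vertical line
through `x` meets `P` in measure zero, the derivative of `t ↦ f(t,y)` at `x`
exists and equals `w(Z) − e(Z)`, the difference of the areas of the parts of
`P` to the left and to the right of the vertical line through `Z`. -/
theorem partial_derivative_average_L1 (P : Set (ℝ × ℝ)) (hP : IsCompact P)
    (hpos : 0 < volume P) (x y : ℝ)
    (hline : volume {p : ℝ × ℝ | p ∈ P ∧ p.1 = x} = 0) :
    HasDerivAt (fun t : ℝ => ∫ p in P, (|t - p.1| + |y - p.2|))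
      ((volume {p : ℝ × ℝ | p ∈ P ∧ p.1 < x}).toReal
        - (volume {p : ℝ × ℝ | p ∈ P ∧ x < p.1}).toReal) x := by
  have hPm : MeasurableSet P := hP.isClosed.measurableSet
  set μ := volume.restrict P with hμ
  set F' : ℝ × ℝ → ℝ := fun p => if p.1 < x then (1:ℝ) else -1 with hF'
  have hmeasL : MeasurableSet {p : ℝ × ℝ | p.1 < x} :=
    measurable_fst measurableSet_Iio
  have : IsFiniteMeasure μ := ⟨by
    rw [hμ, Measure.restrict_apply_univ]; exact hP.measure_lt_top⟩
  have hF'_meas : AEStronglyMeasurable F' μ :=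
    (Measurable.ite hmeasL measurable_const measurable_const).aestronglyMeasurable
  -- Lipschitz with constant 1 in the `t` variable
  have hlip : ∀ p : ℝ × ℝ, LipschitzWith 1 (fun t : ℝ => |t - p.1| + |y - p.2|) := by
    intro p
    apply LipschitzWith.of_dist_le_mul
    intro s t
    rw [Real.dist_eq, Real.dist_eq]
    have h1 : |s - p.1| - |t - p.1| ≤ |s - t| := by
      have := abs_sub_abs_le_abs_sub (s - p.1) (t - p.1)
      simpa [sub_sub_sub_cancel_right] using this
    have h2 : |t - p.1| - |s - p.1| ≤ |s - t| := by
      have := abs_sub_abs_le_abs_sub (t - p.1) (s - p.1)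
      rw [abs_sub_comm (t - p.1)] at this
      simpa [sub_sub_sub_cancel_right] using this
    rw [abs_le]
    push_cast
    constructor <;> nlinarith [h1, h2]
  -- a.e. `p.1 ≠ x`
  have hne : ∀ᵐ p ∂μ, p.1 ≠ x := by
    rw [hμ, ae_restrict_iff' hPm, ae_iff]
    apply measure_mono_null _ hline
    intro p hp
    simp only [Set.mem_setOf_eq, not_forall] at hp ⊢
    tauto
  have h_diff : ∀ᵐ p ∂μ, HasDerivAt (fun t : ℝ => |t - p.1| + |y - p.2|) (F' p) x := by
    filter_upwards [hne] with p hp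
    have h1 : HasDerivAt (fun t : ℝ => t - p.1) 1 x := (hasDerivAt_id x).sub_const p.1
    have h2 : HasDerivAt (fun t : ℝ => |t - p.1|) (F' p) x := by
      rcases lt_or_gt_of_ne hp with h | h
      · -- p.1 < x : derivative is 1 and F' p = 1
        have := (hasDerivAt_abs_pos (by linarith : 0 < x - p.1)).comp x h1
        simp only [Function.comp_def, mul_one] at this
        have hFv : F' p = 1 := by simp [hF', h]
        rw [hFv]; exact this
      · -- x < p.1 : derivative is -1, and F' p = -1
        have := (hasDerivAt_abs_neg (by linarith : x - p.1 < 0)).comp x h1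
        simp only [Function.comp_def, mul_one] at this
        have hFv : F' p = -1 := by simp [hF', not_lt.mpr (le_of_lt h)]
        rw [hFv]; exact this
    simpa using h2.add_const |y - p.2|
  have key := hasDerivAt_integral_of_dominated_loc_of_lip
    (F := fun t (p : ℝ × ℝ) => |t - p.1| + |y - p.2|) (F' := F') (μ := μ)
    (bound := fun _ => (1:ℝ)) (Metric.ball_mem_nhds x one_pos)
    (Filter.Eventually.of_forall fun t =>
      (Continuous.aestronglyMeasurable (by continuity)))
    ?_ hF'_meas
    (Filter.Eventually.of_forall fun p => by
      have := (hlip p).lipschitzOnWith (s := Metric.ball x 1)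
      convert this using 2
      simp)
    (integrable_const 1) h_diff
  · have h2 := key.2
    refine h2.congr_deriv ?_
    rw [hμ]
    -- compute the integral of F'
    have hsplit : (∫ p in P, F' p) = (∫ p in P ∩ {p : ℝ × ℝ | p.1 < x}, F' p)
        + ∫ p in P \ {p : ℝ × ℝ | p.1 < x}, F' p := by
      rw [← integral_inter_add_diff hmeasL (by rw [hμ] at key; exact key.1)]
    have hA : (∫ p in P ∩ {p : ℝ × ℝ | p.1 < x}, F' p)
        = (volume (P ∩ {p : ℝ × ℝ | p.1 < x})).toReal := by
      have : (∫ p in P ∩ {p : ℝ × ℝ | p.1 < x}, F' p)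
          = ∫ _ in P ∩ {p : ℝ × ℝ | p.1 < x}, (1:ℝ) :=
        setIntegral_congr_fun (hPm.inter hmeasL) (fun p hp => by simp only [hF', if_pos (show p.1 < x from hp.2)])
      rw [this]; simp [Measure.real]
    have hB : (∫ p in P \ {p : ℝ × ℝ | p.1 < x}, F' p)
        = -(volume (P \ {p : ℝ × ℝ | p.1 < x})).toReal := by
      have : (∫ p in P \ {p : ℝ × ℝ | p.1 < x}, F' p)
          = ∫ _ in P \ {p : ℝ × ℝ | p.1 < x}, (-1:ℝ) :=
        setIntegral_congr_fun (hPm.diff hmeasL) (fun p hp => by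
          simp only [hF', if_neg (show ¬ p.1 < x from hp.2)])
      rw [this]; simp [Measure.real]
    have hBeq : volume (P \ {p : ℝ × ℝ | p.1 < x})
        = volume {p : ℝ × ℝ | p ∈ P ∧ x < p.1} := by
      apply le_antisymm
      · calc volume (P \ {p : ℝ × ℝ | p.1 < x})
            ≤ volume ({p : ℝ × ℝ | p ∈ P ∧ x < p.1} ∪ {p : ℝ × ℝ | p ∈ P ∧ p.1 = x}) := by
              apply measure_mono
              rintro p ⟨hpP, hpx⟩
              simp only [Set.mem_setOf_eq, not_lt] at hpx
              rcases eq_or_lt_of_le hpx with h | h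
              · right; exact ⟨hpP, h.symm⟩
              · left; exact ⟨hpP, h⟩
          _ ≤ volume {p : ℝ × ℝ | p ∈ P ∧ x < p.1} + volume {p : ℝ × ℝ | p ∈ P ∧ p.1 = x} :=
              measure_union_le _ _
          _ = volume {p : ℝ × ℝ | p ∈ P ∧ x < p.1} := by rw [hline, add_zero]
      · apply measure_mono
        rintro p ⟨hpP, hpx⟩
        exact ⟨hpP, by simp only [Set.mem_setOf_eq, not_lt]; linarith⟩
    have hAeq : P ∩ {p : ℝ × ℝ | p.1 < x} = {p : ℝ × ℝ | p ∈ P ∧ p.1 < x} := rfl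
    rw [hsplit, hA, hB, hAeq, hBeq]
    ring
  · have hc : Continuous fun p : ℝ × ℝ => |x - p.1| + |y - p.2| := by continuity
    rw [hμ]
    exact hc.continuousOn.integrableOn_compact hP
end

section
/- Let P ⊆ ℝ² be a compact set of positive area μ, Z_m = (x_m, y_m) a point such that x_m is a median of the x-marginal and y_m a median of the y-marginal of the uniform distribution on P. Let p₁ = (x₁,y₁) and p₂ = (x₂,y₂) be points with x_m ≤ x₁ ≤ x₂ and y_m ≤ y₁ ≤ y₂ (p₁ dominates p₂). Then f(p₁) ≤ f(p₂), where f(Z) = ∫_P ‖Z − p‖₁ dp. -/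
open MeasureTheory

lemma key_mono (P : Set (ℝ × ℝ)) (hP : IsCompact P) (φ : ℝ × ℝ → ℝ)
    (hφ : Continuous φ) (a b : ℝ) (hab : a ≤ b)
    (hmed : volume P / 2 ≤ volume {p | p ∈ P ∧ φ p ≤ a}) :
    (∫ p in P, |a - φ p|) ≤ ∫ p in P, |b - φ p| := by
  have hPm : MeasurableSet P := hP.measurableSet
  have hμ : volume P ≠ ⊤ := hP.measure_lt_top.ne
  set t : Set (ℝ × ℝ) := {p | φ p ≤ a} with ht
  have htm : MeasurableSet t := measurableSet_le hφ.measurable measurable_const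
  have hA : {p | p ∈ P ∧ φ p ≤ a} = P ∩ t := rfl
  have hia : IntegrableOn (fun p => |a - φ p|) P :=
    ((continuous_const.sub hφ).abs).continuousOn.integrableOn_compact hP
  have hib : IntegrableOn (fun p => |b - φ p|) P :=
    ((continuous_const.sub hφ).abs).continuousOn.integrableOn_compact hP
  have hg : IntegrableOn (fun p => |b - φ p| - |a - φ p|) P := hib.sub hia
  -- measures
  have hsum : volume (P ∩ t) + volume (P \ t) = volume P :=
    measure_inter_add_diff P htm
  have hAle : volume (P ∩ t) ≤ volume P := measure_mono Set.inter_subset_left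
  have hBle : volume (P \ t) ≤ volume P := measure_mono Set.diff_subset
  have hAfin : volume (P ∩ t) ≠ ⊤ := (lt_of_le_of_lt hAle hP.measure_lt_top).ne
  have hBfin : volume (P \ t) ≠ ⊤ := (lt_of_le_of_lt hBle hP.measure_lt_top).ne
  have hmed' : volume P / 2 ≤ volume (P ∩ t) := by rwa [hA] at hmed
  have htr : (volume P / 2).toReal = (volume P).toReal / 2 := by
    rw [ENNReal.toReal_div]; norm_num
  have hsumR : (volume (P ∩ t)).toReal + (volume (P \ t)).toReal = (volume P).toReal := by
    rw [← ENNReal.toReal_add hAfin hBfin, hsum]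
  have hmedR : (volume P).toReal / 2 ≤ (volume (P ∩ t)).toReal := by
    rw [← htr]; exact ENNReal.toReal_mono hAfin hmed'
  have hBA : (volume (P \ t)).toReal ≤ (volume (P ∩ t)).toReal := by linarith
  -- split the integral of the difference
  have hsplit : (∫ p in P, (|b - φ p| - |a - φ p|))
      = (∫ p in P ∩ t, (|b - φ p| - |a - φ p|))
        + ∫ p in P \ t, (|b - φ p| - |a - φ p|) := by
    rw [integral_inter_add_diff htm hg]
  have hOnA : (∫ p in P ∩ t, (|b - φ p| - |a - φ p|))
      = (volume (P ∩ t)).toReal * (b - a) := by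
    rw [setIntegral_congr_fun (hPm.inter htm)
      (fun p hp => by
        have h1 : φ p ≤ a := hp.2
        have : |b - φ p| - |a - φ p| = b - a := by
          rw [abs_of_nonneg (by linarith), abs_of_nonneg (by linarith)]; ring
        exact this)]
    simp [Measure.restrict_apply, smul_eq_mul, measureReal_def]
  have hOnB : -(b - a) * (volume (P \ t)).toReal
      ≤ ∫ p in P \ t, (|b - φ p| - |a - φ p|) := by
    have := setIntegral_mono_on (integrableOn_const hBfin : IntegrableOn (fun _ => -(b - a)) (P \ t))
      (hg.mono_set Set.diff_subset) (hPm.diff htm)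
      (fun p _ => by
        have h1 : |a - φ p| ≤ |a - b| + |b - φ p| := by
          have := abs_sub_abs_le_abs_sub (a - φ p) (b - φ p)
          have h2 : (a - φ p) - (b - φ p) = a - b := by ring
          rw [h2] at this
          linarith [abs_nonneg (b - φ p), this]
        have h3 : |a - b| = b - a := by rw [abs_sub_comm]; exact abs_of_nonneg (by linarith)
        show -(b - a) ≤ |b - φ p| - |a - φ p|
        linarith)
    simpa [smul_eq_mul, mul_comm, measureReal_def] using this
  have hdiff : 0 ≤ ∫ p in P, (|b - φ p| - |a - φ p|) := by
    rw [hsplit, hOnA]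
    nlinarith [abs_nonneg (b-a)]
  have := integral_sub hib hia
  linarith [hdiff, this ▸ hdiff]

/-- Domination lemma: if `Z_m = (x_m, y_m)` is a coordinatewise median of the
uniform distribution on a compact set `P` of positive area, and
`x_m ≤ x₁ ≤ x₂`, `y_m ≤ y₁ ≤ y₂` (so `p₁ = (x₁,y₁)` dominates `p₂ = (x₂,y₂)`),
then `f(p₁) ≤ f(p₂)` for `f(Z) = ∫_P ‖Z − p‖₁ dp`. -/
theorem dominated_point_not_better (P : Set (ℝ × ℝ)) (hP : IsCompact P)
    (hpos : 0 < volume P) (xm ym x₁ y₁ x₂ y₂ : ℝ)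
    (hxm₁ : volume P / 2 ≤ volume {p : ℝ × ℝ | p ∈ P ∧ p.1 ≤ xm})
    (hxm₂ : volume P / 2 ≤ volume {p : ℝ × ℝ | p ∈ P ∧ xm ≤ p.1})
    (hym₁ : volume P / 2 ≤ volume {p : ℝ × ℝ | p ∈ P ∧ p.2 ≤ ym})
    (hym₂ : volume P / 2 ≤ volume {p : ℝ × ℝ | p ∈ P ∧ ym ≤ p.2})
    (hx1 : xm ≤ x₁) (hx2 : x₁ ≤ x₂) (hy1 : ym ≤ y₁) (hy2 : y₁ ≤ y₂) :
    (∫ p in P, (|x₁ - p.1| + |y₁ - p.2|)) ≤ ∫ p in P, (|x₂ - p.1| + |y₂ - p.2|) := by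
  have hix1 : IntegrableOn (fun p : ℝ × ℝ => |x₁ - p.1|) P :=
    ((continuous_const.sub continuous_fst).abs).continuousOn.integrableOn_compact hP
  have hix2 : IntegrableOn (fun p : ℝ × ℝ => |x₂ - p.1|) P :=
    ((continuous_const.sub continuous_fst).abs).continuousOn.integrableOn_compact hP
  have hiy1 : IntegrableOn (fun p : ℝ × ℝ => |y₁ - p.2|) P :=
    ((continuous_const.sub continuous_snd).abs).continuousOn.integrableOn_compact hP
  have hiy2 : IntegrableOn (fun p : ℝ × ℝ => |y₂ - p.2|) P :=
    ((continuous_const.sub continuous_snd).abs).continuousOn.integrableOn_compact hP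
  rw [integral_add hix1 hiy1, integral_add hix2 hiy2]
  have hx : volume P / 2 ≤ volume {p : ℝ × ℝ | p ∈ P ∧ p.1 ≤ x₁} :=
    hxm₁.trans (measure_mono (fun p hp => ⟨hp.1, hp.2.trans hx1⟩))
  have hy : volume P / 2 ≤ volume {p : ℝ × ℝ | p ∈ P ∧ p.2 ≤ y₁} :=
    hym₁.trans (measure_mono (fun p hp => ⟨hp.1, hp.2.trans hy1⟩))
  exact add_le_add
    (key_mono P hP Prod.fst continuous_fst x₁ x₂ hx2 hx)
    (key_mono P hP Prod.snd continuous_snd y₁ y₂ hy2 hy)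
end

section
/- Let P ⊆ ℝ² be a compact set of positive area μ and f(Z) = ∫_P ‖Z−p‖₁ dp. If Z = (x,y) with λ({(u,v)∈P : u < x}) < λ({(u,v)∈P : u > x}), then Z is not a local minimum of f: indeed, for all sufficiently small h > 0, f(x+h, y) < f(x, y). -/
open MeasureTheory Filter

/-- If at `Z = (x,y)` the western area `w(Z) = λ({(u,v)∈P : u < x})` is strictly
smaller than the eastern area `e(Z) = λ({(u,v)∈P : u > x})`, then `Z` is not a
local minimum of `f(Z) = ∫_P ‖Z−p‖₁ dp`: moving east strictly decreases `f`. -/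
theorem unbalanced_not_local_min (P : Set (ℝ × ℝ)) (hP : IsCompact P)
    (hpos : 0 < volume P) (x y : ℝ)
    (hlt : volume {p : ℝ × ℝ | p ∈ P ∧ p.1 < x} < volume {p : ℝ × ℝ | p ∈ P ∧ x < p.1}) :
    ∃ ε > 0, ∀ h : ℝ, 0 < h → h < ε →
      (∫ p in P, (|x + h - p.1| + |y - p.2|)) < ∫ p in P, (|x - p.1| + |y - p.2|) := by
  have hPm : MeasurableSet P := hP.measurableSet
  have hfin : volume P < ⊤ := hP.measure_lt_top
  -- the vertical line {p.1 = x} is null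
  have hline : volume {p : ℝ × ℝ | p.1 = x} = 0 := by
    have he : {p : ℝ × ℝ | p.1 = x} = ({x} : Set ℝ) ×ˢ (Set.univ : Set ℝ) := by
      ext p
      simp only [Set.mem_setOf_eq, Set.mem_prod, Set.mem_singleton_iff, Set.mem_univ, and_true]
    rw [he, Measure.volume_eq_prod, Measure.prod_prod]
    simp
  -- closed west area equals open west area
  have hW0 : volume (P ∩ {p : ℝ × ℝ | p.1 ≤ x}) = volume {p : ℝ × ℝ | p ∈ P ∧ p.1 < x} := by
    apply le_antisymm
    · calc volume (P ∩ {p : ℝ × ℝ | p.1 ≤ x})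
          ≤ volume ({p : ℝ × ℝ | p ∈ P ∧ p.1 < x} ∪ {p : ℝ × ℝ | p.1 = x}) := by
            apply measure_mono; rintro p ⟨hp, hle⟩
            simp only [Set.mem_setOf_eq] at hle
            rcases lt_or_eq_of_le hle with h | h
            · exact Or.inl ⟨hp, h⟩
            · exact Or.inr h
      _ ≤ volume {p : ℝ × ℝ | p ∈ P ∧ p.1 < x} + volume {p : ℝ × ℝ | p.1 = x} :=
            measure_union_le _ _
      _ = volume {p : ℝ × ℝ | p ∈ P ∧ p.1 < x} := by rw [hline, add_zero]
    · apply measure_mono; rintro p ⟨hp, h⟩; exact ⟨hp, le_of_lt h⟩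
  -- sequences
  set A : ℕ → Set (ℝ × ℝ) := fun n => P ∩ {p : ℝ × ℝ | p.1 < x + 1 / (n + 1)} with hA
  set B : ℕ → Set (ℝ × ℝ) := fun n => P ∩ {p : ℝ × ℝ | x + 1 / (n + 1) ≤ p.1} with hB
  have hAmeas : ∀ n, MeasurableSet (A n) := fun n =>
    hPm.inter (measurableSet_lt measurable_fst measurable_const)
  have hAanti : Antitone A := by
    intro m n hmn
    apply Set.inter_subset_inter_right
    intro p hp
    simp only [Set.mem_setOf_eq] at hp ⊢
    refine lt_of_lt_of_le hp ?_
    have : (1 : ℝ) / (n + 1) ≤ 1 / (m + 1) := by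
      apply one_div_le_one_div_of_le <;> [positivity; exact_mod_cast by omega]
    linarith
  have hBmono : Monotone B := by
    intro m n hmn
    apply Set.inter_subset_inter_right
    intro p hp
    simp only [Set.mem_setOf_eq] at hp ⊢
    refine le_trans ?_ hp
    have : (1 : ℝ) / (n + 1) ≤ 1 / (m + 1) := by
      apply one_div_le_one_div_of_le <;> [positivity; exact_mod_cast by omega]
    linarith
  have hAinter : ⋂ n, A n = P ∩ {p : ℝ × ℝ | p.1 ≤ x} := by
    ext p
    simp only [Set.mem_iInter, hA, Set.mem_inter_iff, Set.mem_setOf_eq]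
    constructor
    · intro h
      refine ⟨(h 0).1, ?_⟩
      by_contra hx
      push_neg at hx
      obtain ⟨n, hn⟩ := exists_nat_one_div_lt (sub_pos.2 hx)
      have := (h n).2
      linarith
    · rintro ⟨hp, hle⟩ n
      refine ⟨hp, lt_of_le_of_lt hle ?_⟩
      have : (0:ℝ) < 1 / (n+1) := by positivity
      linarith
  have hBunion : ⋃ n, B n = {p : ℝ × ℝ | p ∈ P ∧ x < p.1} := by
    ext p
    simp only [Set.mem_iUnion, hB, Set.mem_inter_iff, Set.mem_setOf_eq]
    constructor
    · rintro ⟨n, hp, hle⟩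
      refine ⟨hp, lt_of_lt_of_le ?_ hle⟩
      have : (0:ℝ) < 1 / (n+1) := by positivity
      linarith
    · rintro ⟨hp, hx⟩
      obtain ⟨n, hn⟩ := exists_nat_one_div_lt (sub_pos.2 hx)
      exact ⟨n, hp, by linarith⟩
  have hAt : Tendsto (fun n => volume (A n)) atTop
      (nhds (volume {p : ℝ × ℝ | p ∈ P ∧ p.1 < x})) := by
    have := tendsto_measure_iInter_atTop (μ := volume) (fun n => (hAmeas n).nullMeasurableSet)
      hAanti ⟨0, by
        refine ne_of_lt (lt_of_le_of_lt (measure_mono Set.inter_subset_left) hfin)⟩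
    rwa [hAinter, hW0] at this
  have hBt : Tendsto (fun n => volume (B n)) atTop
      (nhds (volume {p : ℝ × ℝ | p ∈ P ∧ x < p.1})) := by
    have := tendsto_measure_iUnion_atTop (μ := volume) hBmono
    rwa [hBunion] at this
  obtain ⟨c, hc1, hc2⟩ := exists_between hlt
  have ev : ∀ᶠ n in atTop, volume (A n) < c ∧ c < volume (B n) :=
    (hAt.eventually_lt_const hc1).and (hBt.eventually_const_lt hc2)
  obtain ⟨n, hn1, hn2⟩ := ev.exists
  refine ⟨1 / (n + 1), by positivity, ?_⟩
  intro h hh0 hhε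
  -- set up the sets at width h
  set S : Set (ℝ × ℝ) := P ∩ {p : ℝ × ℝ | p.1 < x + h} with hS
  set T : Set (ℝ × ℝ) := P ∩ {p : ℝ × ℝ | x + h ≤ p.1} with hT
  have hSm : MeasurableSet S := hPm.inter (measurableSet_lt measurable_fst measurable_const)
  have hTm : MeasurableSet T := hPm.inter (measurableSet_le measurable_const measurable_fst)
  have hST : Disjoint S T := by
    rw [Set.disjoint_left]
    rintro p ⟨_, h1⟩ ⟨_, h2⟩
    simp only [Set.mem_setOf_eq] at h1 h2
    linarith
  have hSTu : S ∪ T = P := by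
    ext p
    simp only [hS, hT, Set.mem_union, Set.mem_inter_iff, Set.mem_setOf_eq]
    constructor
    · rintro (⟨hp, _⟩ | ⟨hp, _⟩) <;> exact hp
    · intro hp; rcases lt_or_ge p.1 (x + h) with h1 | h1
      · exact Or.inl ⟨hp, h1⟩
      · exact Or.inr ⟨hp, h1⟩
  -- measure comparison
  have hvolS : volume S < c := by
    refine lt_of_le_of_lt (measure_mono ?_) hn1
    apply Set.inter_subset_inter_right
    intro p hp
    simp only [Set.mem_setOf_eq] at hp ⊢
    have h1 : (1:ℝ)/(n+1) > 0 := by positivity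
    linarith
  have hvolT : c < volume T := by
    refine lt_of_lt_of_le hn2 (measure_mono ?_)
    apply Set.inter_subset_inter_right
    intro p hp
    simp only [Set.mem_setOf_eq] at hp ⊢
    linarith
  have hSfin : volume S ≠ ⊤ := ne_of_lt (lt_of_le_of_lt (measure_mono Set.inter_subset_left) hfin)
  have hTfin : volume T ≠ ⊤ := ne_of_lt (lt_of_le_of_lt (measure_mono Set.inter_subset_left) hfin)
  have hab : (volume S).toReal < (volume T).toReal := by
    apply ENNReal.toReal_lt_toReal hSfin hTfin |>.2
    exact lt_trans hvolS hvolT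
  -- integrability
  have hint1 : IntegrableOn (fun p : ℝ × ℝ => |x + h - p.1| + |y - p.2|) P volume :=
    (Continuous.continuousOn (((continuous_const.sub continuous_fst).abs.add
      ((continuous_const.sub continuous_snd).abs)))).integrableOn_compact hP
  have hint2 : IntegrableOn (fun p : ℝ × ℝ => |x - p.1| + |y - p.2|) P volume :=
    (Continuous.continuousOn (((continuous_const.sub continuous_fst).abs.add
      ((continuous_const.sub continuous_snd).abs)))).integrableOn_compact hP
  have hintg : IntegrableOn (fun p : ℝ × ℝ => |x + h - p.1| - |x - p.1|) P volume :=
    (Continuous.continuousOn ((continuous_const.sub continuous_fst).abs.sub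
      (continuous_const.sub continuous_fst).abs)).integrableOn_compact hP
  -- compute the difference
  rw [← sub_neg]
  rw [← integral_sub hint1 hint2]
  have heq : ∀ p : ℝ × ℝ, (|x + h - p.1| + |y - p.2|) - (|x - p.1| + |y - p.2|)
      = |x + h - p.1| - |x - p.1| := by intro p; ring
  rw [show (fun p : ℝ × ℝ => (|x + h - p.1| + |y - p.2|) - (|x - p.1| + |y - p.2|))
      = fun p : ℝ × ℝ => |x + h - p.1| - |x - p.1| from funext heq]
  have hsplit : ∫ p in P, (|x + h - p.1| - |x - p.1|)
      = (∫ p in S, (|x + h - p.1| - |x - p.1|)) + ∫ p in T, (|x + h - p.1| - |x - p.1|) := by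
    rw [← setIntegral_union hST hTm (hintg.mono_set Set.inter_subset_left)
      (hintg.mono_set Set.inter_subset_left), hSTu]
  rw [hsplit]
  have hSbound : (∫ p in S, (|x + h - p.1| - |x - p.1|)) ≤ h * (volume S).toReal := by
    calc (∫ p in S, (|x + h - p.1| - |x - p.1|)) ≤ ∫ _ in S, h := by
          apply setIntegral_mono_on (hintg.mono_set Set.inter_subset_left)
            (integrableOn_const (lt_of_le_of_lt (measure_mono Set.inter_subset_left) hfin).ne)
            hSm
          intro p _
          have h1 : |x + h - p.1| ≤ |x - p.1| + |h| := by
            have : x + h - p.1 = (x - p.1) + h := by ring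
            rw [this]; exact abs_add_le _ _
          rw [abs_of_pos hh0] at h1
          linarith
      _ = (volume S).toReal * h := by rw [setIntegral_const]; simp [Measure.real]
      _ = h * (volume S).toReal := by ring
  have hTeq : (∫ p in T, (|x + h - p.1| - |x - p.1|)) = -h * (volume T).toReal := by
    have : (∫ p in T, (|x + h - p.1| - |x - p.1|)) = ∫ _ in T, (-h) := by
      apply setIntegral_congr_fun hTm
      rintro p ⟨_, hle⟩
      show |x + h - p.1| - |x - p.1| = -h
      have hle' : x + h ≤ p.1 := hle
      have h1 : |x + h - p.1| = p.1 - (x + h) := by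
        rw [abs_of_nonpos (by linarith)]; ring
      have h2 : |x - p.1| = p.1 - x := by
        rw [abs_of_nonpos (by linarith)]; ring
      rw [h1, h2]; ring
    rw [this, setIntegral_const]; simp [mul_comm, Measure.real]
  rw [hTeq]
  have : h * (volume S).toReal + -h * (volume T).toReal < 0 := by nlinarith
  linarith
end

section
/- Let p₁, p₂ ∈ ℝ² with p₁ = (a₁,b₁), p₂ = (a₂,b₂), a₁ ≠ a₂, b₁ ≠ b₂, and |a₁ − a₂| ≠ |b₁ − b₂|. Then the L1 bisector B = {q ∈ ℝ² : ‖q − p₁‖₁ = ‖q − p₂‖₁} has 2-dimensional Lebesgue measure zero. -/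
open MeasureTheory

/-- Key injectivity lemma: if `|y - b₁| - |y - b₂| = c` has two solutions,
then `c = b₁ - b₂` or `c = b₂ - b₁`. -/
lemma L1_slice_unique (b₁ b₂ c y₁ y₂ : ℝ) (hc : c ≠ b₁ - b₂) (hc' : c ≠ b₂ - b₁)
    (h1 : |y₁ - b₁| - |y₁ - b₂| = c) (h2 : |y₂ - b₁| - |y₂ - b₂| = c) : y₁ = y₂ := by
  rcases lt_or_gt_of_ne hc with h | h <;>
  rcases lt_or_gt_of_ne hc' with h' | h' <;>
  rcases abs_cases (y₁ - b₁) with ⟨e1, p1⟩ | ⟨e1, p1⟩ <;>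
  rcases abs_cases (y₁ - b₂) with ⟨e2, p2⟩ | ⟨e2, p2⟩ <;>
  rcases abs_cases (y₂ - b₁) with ⟨e3, p3⟩ | ⟨e3, p3⟩ <;>
  rcases abs_cases (y₂ - b₂) with ⟨e4, p4⟩ | ⟨e4, p4⟩ <;>
  rw [e1, e2] at h1 <;> rw [e3, e4] at h2 <;> linarith

/-- If `p₁ = (a₁,b₁)` and `p₂ = (a₂,b₂)` differ in both coordinates and do not
lie on a common line of slope `±1` (`|a₁−a₂| ≠ |b₁−b₂|`), then their L1
bisector has 2-dimensional Lebesgue measure zero. -/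
theorem L1_bisector_measure_zero (a₁ b₁ a₂ b₂ : ℝ) (ha : a₁ ≠ a₂) (hb : b₁ ≠ b₂)
    (hdiag : |a₁ - a₂| ≠ |b₁ - b₂|) :
    volume {q : ℝ × ℝ | |q.1 - a₁| + |q.2 - b₁| = |q.1 - a₂| + |q.2 - b₂|} = 0 := by
  set S : Set (ℝ × ℝ) := {q : ℝ × ℝ | |q.1 - a₁| + |q.2 - b₁| = |q.1 - a₂| + |q.2 - b₂|}
  have hS : MeasurableSet S := by
    apply measurableSet_eq_fun <;> fun_prop
  -- the set of bad x's
  set G : Set ℝ := {x : ℝ | |x - a₂| - |x - a₁| = b₁ - b₂ ∨ |x - a₂| - |x - a₁| = b₂ - b₁}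
  have hG : volume G = 0 := by
    have h1 : (b₁ - b₂) ≠ a₂ - a₁ := fun h => hdiag (by rw [abs_sub_comm a₁ a₂, ← h])
    have h2 : (b₁ - b₂) ≠ a₁ - a₂ := fun h => hdiag (by rw [← h])
    have h3 : (b₂ - b₁) ≠ a₂ - a₁ := fun h => by
      apply hdiag; rw [abs_sub_comm a₁ a₂, ← h, abs_sub_comm]
    have h4 : (b₂ - b₁) ≠ a₁ - a₂ := fun h => hdiag (by rw [← h, abs_sub_comm])
    have hsub : G ⊆ {x : ℝ | |x - a₂| - |x - a₁| = b₁ - b₂} ∪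
        {x : ℝ | |x - a₂| - |x - a₁| = b₂ - b₁} := fun x hx => hx
    refine measure_mono_null hsub (le_antisymm (le_trans (measure_union_le _ _) ?_) zero_le)
    have s1 : ({x : ℝ | |x - a₂| - |x - a₁| = b₁ - b₂} : Set ℝ).Subsingleton := by
      intro x hx y hy
      exact L1_slice_unique a₂ a₁ (b₁ - b₂) x y h1 h2 hx hy
    have s2 : ({x : ℝ | |x - a₂| - |x - a₁| = b₂ - b₁} : Set ℝ).Subsingleton := by
      intro x hx y hy
      exact L1_slice_unique a₂ a₁ (b₂ - b₁) x y h3 h4 hx hy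
    rw [s1.measure_zero, s2.measure_zero, add_zero]
  rw [Measure.volume_eq_prod, Measure.measure_prod_null hS]
  have hae : ∀ᵐ x : ℝ, x ∉ G := by
    rw [ae_iff]
    simpa using hG
  filter_upwards [hae] with x hx
  simp only [Pi.zero_apply]
  have hsub : (Prod.mk x ⁻¹' S).Subsingleton := by
    intro y₁ hy₁ y₂ hy₂
    simp only [S, Set.mem_preimage, Set.mem_setOf_eq] at hy₁ hy₂
    have e1 : |y₁ - b₁| - |y₁ - b₂| = |x - a₂| - |x - a₁| := by linarith
    have e2 : |y₂ - b₁| - |y₂ - b₂| = |x - a₂| - |x - a₁| := by linarith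
    have c1 : |x - a₂| - |x - a₁| ≠ b₁ - b₂ := fun h => hx (Or.inl h)
    have c2 : |x - a₂| - |x - a₁| ≠ b₂ - b₁ := fun h => hx (Or.inr h)
    exact L1_slice_unique b₁ b₂ _ y₁ y₂ c1 c2 e1 e2
  exact hsub.measure_zero _
end
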